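/- (The convex structure of covariant cloners equals that of bipartite states.) For a, b : ZMod d × ZMod d → ℂ with Σ_{r,s}|a_{r,s}|² = Σ_{r,s}|b_{r,s}|² = 1, one has P_a = P_b if and only if there exists c ∈ ℂ with |c| = 1 and b = c·a; i.e., the extremal covariant operators P_a are in one-to-one correspondence with pure states of ℂ^d ⊗ ℂ^d up to a global phase. -/

import Mathlib

open Matrix Kronecker BigOperators

/-- ω = exp(2πi/d). -/
noncomputable def omega (d : ℕ) : ℂ := Complex.exp (2 * Real.pi * Complex.I / d)

/-- The Weyl–Heisenberg matrix `U_{p,q}`. -/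
noncomputable def WH (d : ℕ) [NeZero d] (p q : ZMod d) : Matrix (ZMod d) (ZMod d) ℂ :=
  fun j k => if j = k + p then omega d ^ (q.val * k.val) else 0

/-- The operator `P_a` on `(ℂ^d)^⊗3` associated to the coefficients `a`:
`(P_a)_{(i,j,k),(i',j',k')} = (1/d) Σ_{r,s,r',s'} a_{rs} conj(a_{r's'})
  (U_{rs}ᴴ U_{r's'})_{i,i'} (U_{rs})_{j,k} conj((U_{r's'})_{j',k'})`. -/
noncomputable def Pa (d : ℕ) [NeZero d] (a : ZMod d × ZMod d → ℂ) :
    Matrix (ZMod d × ZMod d × ZMod d) (ZMod d × ZMod d × ZMod d) ℂ :=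
  fun x y => (d : ℂ)⁻¹ * ∑ r : ZMod d, ∑ s : ZMod d, ∑ r' : ZMod d, ∑ s' : ZMod d,
    a (r, s) * (starRingEnd ℂ) (a (r', s')) * ((WH d r s)ᴴ * WH d r' s') x.1 y.1 *
      WH d r s x.2.1 x.2.2 * (starRingEnd ℂ) (WH d r' s' y.2.1 y.2.2)

lemma omega_prim (d : ℕ) [NeZero d] : IsPrimitiveRoot (omega d) d :=
  Complex.isPrimitiveRoot_exp d (NeZero.ne d)

lemma omega_pow_d (d : ℕ) [NeZero d] : omega d ^ d = 1 := (omega_prim d).pow_eq_one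

lemma omega_pow_mod (d : ℕ) [NeZero d] (n : ℕ) : omega d ^ n = omega d ^ (n % d) := by
  conv_lhs => rw [← Nat.div_add_mod n d, pow_add, pow_mul, omega_pow_d, one_pow, one_mul]

noncomputable def chi (d : ℕ) [NeZero d] (t : ZMod d) : ℂ := omega d ^ t.val

lemma chi_zero (d : ℕ) [NeZero d] : chi d 0 = 1 := by simp [chi, ZMod.val_zero]

lemma chi_add (d : ℕ) [NeZero d] (s t : ZMod d) : chi d (s + t) = chi d s * chi d t := by
  rw [chi, chi, chi, ← pow_add, ZMod.val_add, ← omega_pow_mod]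

lemma chi_mul_val (d : ℕ) [NeZero d] (s t : ZMod d) :
    omega d ^ (s.val * t.val) = chi d (s * t) := by
  rw [chi, ZMod.val_mul, ← omega_pow_mod]

lemma abs_omega (d : ℕ) [NeZero d] : ‖omega d‖ = 1 := by
  rw [omega, Complex.norm_exp]
  norm_num [Complex.div_re, Complex.mul_re, Complex.mul_im]

lemma abs_chi (d : ℕ) [NeZero d] (t : ZMod d) : ‖chi d t‖ = 1 := by
  rw [chi, norm_pow, abs_omega, one_pow]

lemma conj_chi (d : ℕ) [NeZero d] (t : ZMod d) :
    (starRingEnd ℂ) (chi d t) = chi d (-t) := by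
  have h1 : chi d t * chi d (-t) = 1 := by rw [← chi_add]; simp [chi_zero]
  have h2 : chi d t * (starRingEnd ℂ) (chi d t) = 1 := by
    rw [Complex.mul_conj]
    norm_cast
    rw [← Complex.sq_norm, abs_chi]; norm_num
  have h3 : chi d t ≠ 0 := by
    intro h; rw [h, zero_mul] at h1; exact one_ne_zero h1.symm
  exact mul_left_cancel₀ h3 (h2.trans h1.symm)

lemma sum_val (d : ℕ) [NeZero d] (x : ℂ) :
    ∑ t : ZMod d, x ^ t.val = ∑ j ∈ Finset.range d, x ^ j := by
  apply Finset.sum_nbij' (fun t : ZMod d => t.val) (fun j => (j : ZMod d))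
  · intro t _; exact Finset.mem_range.mpr (ZMod.val_lt t)
  · intro j _; exact Finset.mem_univ _
  · intro t _; exact ZMod.natCast_zmod_val t
  · intro j hj; exact ZMod.val_cast_of_lt (Finset.mem_range.mp hj)
  · intro t _; rfl

lemma sum_chi (d : ℕ) [NeZero d] (s : ZMod d) :
    ∑ t : ZMod d, chi d (s * t) = if s = 0 then (d : ℂ) else 0 := by
  have key : ∑ t : ZMod d, chi d (s * t) = ∑ j ∈ Finset.range d, (omega d ^ s.val) ^ j := by
    rw [← sum_val]
    exact Finset.sum_congr rfl fun t _ => by rw [← chi_mul_val, pow_mul]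
  rw [key]
  by_cases hs : s = 0
  · simp [hs]
  · rw [if_neg hs]
    have hx : omega d ^ s.val ≠ 1 := by
      apply (omega_prim d).pow_ne_one_of_pos_of_lt
      · exact fun h => hs (by rwa [← ZMod.val_eq_zero])
      · exact ZMod.val_lt s
    rw [geom_sum_eq hx]
    rw [← pow_mul, mul_comm, pow_mul, omega_pow_d, one_pow, sub_self, zero_div]

noncomputable def gg (d : ℕ) [NeZero d] (a : ZMod d × ZMod d → ℂ) (r u : ZMod d) : ℂ :=
  ∑ s : ZMod d, a (r, s) * chi d (s * u)

-- inversion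
lemma gg_inv (d : ℕ) [NeZero d] (a : ZMod d × ZMod d → ℂ) (r s : ZMod d) :
    ∑ u : ZMod d, gg d a r u * chi d (-(s * u)) = (d : ℂ) * a (r, s) := by
  unfold gg
  simp only [Finset.sum_mul]
  rw [Finset.sum_comm]
  have : ∀ t : ZMod d, ∑ u : ZMod d, a (r, t) * chi d (t * u) * chi d (-(s * u))
      = a (r, t) * (if t - s = 0 then (d : ℂ) else 0) := by
    intro t
    rw [← sum_chi d (t - s), Finset.mul_sum]
    apply Finset.sum_congr rfl
    intro u _
    rw [mul_assoc, ← chi_add]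
    ring_nf
  rw [Finset.sum_congr rfl fun t _ => this t]
  rw [Finset.sum_eq_single s]
  · simp [mul_comm]
  · intro t _ ht; rw [if_neg (by simpa [sub_eq_zero] using ht), mul_zero]
  · intro h; exact absurd (Finset.mem_univ s) h

-- Parseval
lemma gg_parseval (d : ℕ) [NeZero d] (a : ZMod d × ZMod d → ℂ) (r : ZMod d) :
    ∑ u : ZMod d, gg d a r u * (starRingEnd ℂ) (gg d a r u)
      = (d : ℂ) * ∑ s : ZMod d, a (r, s) * (starRingEnd ℂ) (a (r, s)) := by
  unfold gg
  have expand : ∀ u : ZMod d, gg d a r u * (starRingEnd ℂ) (gg d a r u)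
      = ∑ s : ZMod d, ∑ t : ZMod d,
          a (r, s) * (starRingEnd ℂ) (a (r, t)) * chi d ((s - t) * u) := by
    intro u
    unfold gg
    rw [map_sum, Finset.sum_mul_sum]
    apply Finset.sum_congr rfl; intro s _
    apply Finset.sum_congr rfl; intro t _
    rw [_root_.map_mul, conj_chi, sub_mul, sub_eq_add_neg, chi_add, ← neg_mul]
    ring
  calc ∑ u : ZMod d, (∑ s : ZMod d, a (r, s) * chi d (s * u)) *
          (starRingEnd ℂ) (∑ s : ZMod d, a (r, s) * chi d (s * u))
      = ∑ u : ZMod d, ∑ s : ZMod d, ∑ t : ZMod d,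
          a (r, s) * (starRingEnd ℂ) (a (r, t)) * chi d ((s - t) * u) := by
        exact Finset.sum_congr rfl fun u _ => expand u
    _ = ∑ s : ZMod d, ∑ t : ZMod d,
          a (r, s) * (starRingEnd ℂ) (a (r, t)) * (if s - t = 0 then (d : ℂ) else 0) := by
        rw [Finset.sum_comm]
        apply Finset.sum_congr rfl; intro s _
        rw [Finset.sum_comm]
        apply Finset.sum_congr rfl; intro t _
        rw [← Finset.mul_sum, sum_chi]
    _ = (d : ℂ) * ∑ s : ZMod d, a (r, s) * (starRingEnd ℂ) (a (r, s)) := by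
        rw [Finset.mul_sum]
        apply Finset.sum_congr rfl; intro s _
        rw [Finset.sum_eq_single s]
        · simp [mul_comm]
        · intro t _ ht; rw [if_neg (by simpa [sub_eq_zero] using ht.symm), mul_zero]
        · intro h; exact absurd (Finset.mem_univ s) h

lemma WH_apply (d : ℕ) [NeZero d] (p q j k : ZMod d) :
    WH d p q j k = if j = k + p then chi d (q * k) else 0 := by
  rw [WH, chi_mul_val]

lemma chi_sub (d : ℕ) [NeZero d] (s t : ZMod d) :
    chi d (s - t) = chi d s * chi d (-t) := by rw [sub_eq_add_neg, chi_add]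

lemma WH_conj_mul (d : ℕ) [NeZero d] (r s r' s' i i' : ZMod d) :
    ((WH d r s)ᴴ * WH d r' s') i i' =
      if i + r = i' + r' then (starRingEnd ℂ) (chi d (s * i)) * chi d (s' * i') else 0 := by
  rw [Matrix.mul_apply]
  simp only [Matrix.conjTranspose_apply, WH_apply, starRingEnd_apply]
  by_cases h : i + r = i' + r'
  · rw [if_pos h, Finset.sum_eq_single (i + r)]
    · rw [if_pos rfl, if_pos h]
    · intro m _ hm
      rw [if_neg (fun hh => hm hh), star_zero, zero_mul]
    · intro h; exact absurd (Finset.mem_univ _) h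
  · rw [if_neg h]
    apply Finset.sum_eq_zero
    intro m _
    by_cases hm : m = i + r
    · rw [if_neg (fun hh => h (hm ▸ hh : i + r = i' + r')), mul_zero]
    · rw [if_neg hm, star_zero, zero_mul]

lemma Pa_entry (d : ℕ) [NeZero d] (a : ZMod d × ZMod d → ℂ) (i k i' k' r r' : ZMod d)
    (h : i + r = i' + r') :
    Pa d a (i, k + r, k) (i', k' + r', k') =
      (d : ℂ)⁻¹ * (gg d a r (k - i) * (starRingEnd ℂ) (gg d a r' (k' - i'))) := by
  rw [Pa]
  simp only [Prod.fst, Prod.snd]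
  congr 1
  rw [Finset.sum_eq_single r]
  · rw [Finset.sum_comm]
    rw [Finset.sum_eq_single r']
    · unfold gg
      rw [map_sum, Finset.sum_mul_sum]
      apply Finset.sum_congr rfl; intro s _
      apply Finset.sum_congr rfl; intro s' _
      rw [WH_conj_mul, if_pos h, WH_apply d r s (k + r) k, WH_apply d r' s' (k' + r') k',
        if_pos rfl, if_pos rfl]
      simp only [_root_.map_mul, conj_chi]
      rw [mul_sub s k i, chi_sub, mul_sub s' k' i', neg_sub, chi_sub]
      ring
    · intro r₂ _ hne
      apply Finset.sum_eq_zero; intro s _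
      apply Finset.sum_eq_zero; intro s' _
      rw [WH_apply d r₂ s' (k' + r') k',
        if_neg (fun hh => hne (add_left_cancel hh).symm), map_zero, mul_zero]
    · intro hh; exact absurd (Finset.mem_univ _) hh
  · intro r₁ _ hne
    apply Finset.sum_eq_zero; intro s _
    apply Finset.sum_eq_zero; intro r₂ _
    apply Finset.sum_eq_zero; intro s' _
    rw [WH_apply d r₁ s (k + r) k, if_neg (fun hh => hne (add_left_cancel hh).symm)]
    simp only [mul_zero, zero_mul]
  · intro hh; exact absurd (Finset.mem_univ _) hh

lemma norm_one_cast (d : ℕ) [NeZero d] (a : ZMod d × ZMod d → ℂ)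
    (ha : ∑ rs : ZMod d × ZMod d, ‖a rs‖ ^ 2 = 1) :
    ∑ rs : ZMod d × ZMod d, a rs * (starRingEnd ℂ) (a rs) = 1 := by
  have step : ∀ rs : ZMod d × ZMod d, a rs * (starRingEnd ℂ) (a rs)
      = ((‖a rs‖ ^ 2 : ℝ) : ℂ) := fun rs => by
    rw [Complex.mul_conj, Complex.sq_norm]
  rw [Finset.sum_congr rfl fun rs _ => step rs, ← Complex.ofReal_sum, ha, Complex.ofReal_one]


/-- The convex structure of covariant cloners equals that of bipartite pure states:
for normalized coefficients `a, b`, one has `P_a = P_b` iff `b = c • a` for some phase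
`c` with `|c| = 1`. -/
theorem Pa_eq_iff_phase (d : ℕ) [NeZero d] (a b : ZMod d × ZMod d → ℂ)
    (ha : ∑ rs : ZMod d × ZMod d, ‖a rs‖ ^ 2 = 1)
    (hb : ∑ rs : ZMod d × ZMod d, ‖b rs‖ ^ 2 = 1) :
    Pa d a = Pa d b ↔ ∃ c : ℂ, ‖c‖ = 1 ∧ b = c • a := by
  have hd : (d : ℂ) ≠ 0 := Nat.cast_ne_zero.mpr (NeZero.ne d)
  constructor
  · intro h
    have key : ∀ r u r' u' : ZMod d,
        gg d a r u * (starRingEnd ℂ) (gg d a r' u')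
          = gg d b r u * (starRingEnd ℂ) (gg d b r' u') := by
      intro r u r' u'
      have hcond : (0 : ZMod d) + r = (r - r') + r' := by ring
      have e1 := Pa_entry d a 0 u (r - r') (u' + (r - r')) r r' hcond
      have e2 := Pa_entry d b 0 u (r - r') (u' + (r - r')) r r' hcond
      have e3 : Pa d a (0, u + r, u) (r - r', (u' + (r - r')) + r', u' + (r - r'))
          = Pa d b (0, u + r, u) (r - r', (u' + (r - r')) + r', u' + (r - r')) := by rw [h]
      rw [e1, e2] at e3
      simp only [sub_zero, add_sub_cancel_right] at e3
      exact mul_left_cancel₀ (inv_ne_zero hd) e3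
    have habs : ∀ r u : ZMod d, gg d a r u * (starRingEnd ℂ) (gg d a r u)
        = gg d b r u * (starRingEnd ℂ) (gg d b r u) := fun r u => key r u r u
    have ha' := norm_one_cast d a ha
    have hsumA : ∑ r : ZMod d, ∑ u : ZMod d, gg d a r u * (starRingEnd ℂ) (gg d a r u)
        = (d : ℂ) := by
      have hfold : ∑ r : ZMod d, ∑ s : ZMod d, a (r, s) * (starRingEnd ℂ) (a (r, s))
          = ∑ rs : ZMod d × ZMod d, a rs * (starRingEnd ℂ) (a rs) :=
        (Fintype.sum_prod_type (fun rs => a rs * (starRingEnd ℂ) (a rs))).symm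
      rw [Finset.sum_congr rfl fun r _ => gg_parseval d a r, ← Finset.mul_sum,
        hfold, ha', mul_one]
    have hex : ∃ r u : ZMod d, gg d a r u ≠ 0 := by
      by_contra hno
      push_neg at hno
      simp only [hno, zero_mul, Finset.sum_const_zero] at hsumA
      exact hd hsumA.symm
    obtain ⟨r₀, u₀, h0⟩ := hex
    have hAB : ‖gg d a r₀ u₀‖ = ‖gg d b r₀ u₀‖ := by
      have := habs r₀ u₀
      rw [Complex.mul_conj, Complex.mul_conj] at this
      rw [Complex.norm_def, Complex.norm_def, Complex.ofReal_inj.mp this]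
    have hb0 : gg d b r₀ u₀ ≠ 0 := by
      intro hz
      rw [hz, norm_zero] at hAB
      exact h0 (norm_eq_zero.mp hAB)
    set c : ℂ := gg d b r₀ u₀ / gg d a r₀ u₀ with hc_def
    have hc : ‖c‖ = 1 := by
      rw [hc_def, norm_div, ← hAB, div_self (norm_ne_zero_iff.mpr h0)]
    have hcomm : (starRingEnd ℂ) (gg d a r₀ u₀) = c * (starRingEnd ℂ) (gg d b r₀ u₀) := by
      rw [hc_def, div_mul_eq_mul_div, eq_div_iff h0]
      linear_combination habs r₀ u₀
    have hcgb : (starRingEnd ℂ) (gg d b r₀ u₀) ≠ 0 := by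
      simpa using hb0
    have hgb : ∀ r u : ZMod d, gg d b r u = c * gg d a r u := by
      intro r u
      have hk := key r u r₀ u₀
      rw [hcomm] at hk
      apply mul_right_cancel₀ hcgb
      linear_combination - hk
    refine ⟨c, hc, ?_⟩
    funext rs
    obtain ⟨r, s⟩ := rs
    have h1 := gg_inv d b r s
    have h2 := gg_inv d a r s
    rw [Finset.sum_congr rfl (fun u _ => by rw [hgb r u])] at h1
    have h3 : (d : ℂ) * b (r, s) = c * ((d : ℂ) * a (r, s)) := by
      rw [← h1, ← h2, Finset.mul_sum]
      exact Finset.sum_congr rfl fun u _ => by ring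
    have h4 : b (r, s) = c * a (r, s) := by
      apply mul_left_cancel₀ hd
      rw [h3]; ring
    rw [Pi.smul_apply, smul_eq_mul]
    exact h4
  · rintro ⟨c, hc, rfl⟩
    have hcc : c * (starRingEnd ℂ) c = 1 := by
      rw [Complex.mul_conj]
      norm_cast
      rw [← Complex.sq_norm, hc]; norm_num
    funext x y
    rw [Pa, Pa]
    congr 1
    apply Finset.sum_congr rfl; intro r _
    apply Finset.sum_congr rfl; intro s _
    apply Finset.sum_congr rfl; intro r' _
    apply Finset.sum_congr rfl; intro s' _
    have h2 : (c • a) (r, s) * (starRingEnd ℂ) ((c • a) (r', s'))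
        = a (r, s) * (starRingEnd ℂ) (a (r', s')) := by
      simp only [Pi.smul_apply, smul_eq_mul, _root_.map_mul]
      calc c * a (r, s) * ((starRingEnd ℂ) c * (starRingEnd ℂ) (a (r', s')))
          = (c * (starRingEnd ℂ) c) * (a (r, s) * (starRingEnd ℂ) (a (r', s'))) := by ring
        _ = _ := by rw [hcc, one_mul]
    rw [h2]
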